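/- In a Q-metric space (X,d) with Q a continuous quantale, if y ∈ B(x₁,δ₁) ∩ B(x₂,δ₂) then there exists δ' ≪ 1 with B(y,δ') ⊆ B(x₁,δ₁) ∩ B(x₂,δ₂); hence the open balls form a base of a topology τ_d on X. -/

import Mathlib

/-- `a` is way-below `b`: for every nonempty directed `D` with `b ≤ sSup D`,
some element of `D` dominates `a`. -/
def WayBelow {Q : Type*} [CompleteLattice Q] (a b : Q) : Prop :=
  ∀ D : Set Q, D.Nonempty → DirectedOn (· ≤ ·) D → b ≤ sSup D → ∃ d ∈ D, a ≤ d

/-- A complete lattice is continuous if every element is the join of the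
elements way-below it. -/
def ContinuousLattice (Q : Type*) [CompleteLattice Q] : Prop :=
  ∀ x : Q, x = sSup {y | WayBelow y x}

/-- Open ball in a `Q`-metric space. -/
def ball {Q X : Type*} [CompleteLattice Q] (d : X → X → Q) (x : X) (δ : Q) : Set X :=
  {y | WayBelow δ (d x y)}

section Aux

variable {Q : Type*} [CompleteLattice Q]

lemma wb_bot (b : Q) : WayBelow ⊥ b := by
  intro D hne _ _
  obtain ⟨d, hd⟩ := hne
  exact ⟨d, hd, bot_le⟩

lemma wb_le {a b : Q} (h : WayBelow a b) : a ≤ b := by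
  obtain ⟨d, hd, hle⟩ := h {b} ⟨b, rfl⟩ (directedOn_singleton b) (by simp)
  simpa [Set.mem_singleton_iff.mp hd] using hle

lemma wb_le_left {a b c : Q} (hab : a ≤ b) (h : WayBelow b c) : WayBelow a c := by
  intro D hne hdir hle
  obtain ⟨e, he, hbe⟩ := h D hne hdir hle
  exact ⟨e, he, hab.trans hbe⟩

lemma wb_le_right {a b c : Q} (h : WayBelow a b) (hbc : b ≤ c) : WayBelow a c := by
  intro D hne hdir hle
  exact h D hne hdir (hbc.trans hle)

lemma wb_sup {a b c : Q} (ha : WayBelow a c) (hb : WayBelow b c) : WayBelow (a ⊔ b) c := by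
  intro D hne hdir hle
  obtain ⟨d₁, hd₁, h₁⟩ := ha D hne hdir hle
  obtain ⟨d₂, hd₂, h₂⟩ := hb D hne hdir hle
  obtain ⟨e, he, he₁, he₂⟩ := hdir d₁ hd₁ d₂ hd₂
  exact ⟨e, he, sup_le (h₁.trans he₁) (h₂.trans he₂)⟩

/-- Interpolation property of continuous lattices. -/
lemma wb_interpolate (hcont : ContinuousLattice Q) {a b : Q} (h : WayBelow a b) :
    ∃ c : Q, WayBelow a c ∧ WayBelow c b := by
  set D : Set Q := {t | ∃ s, WayBelow t s ∧ WayBelow s b} with hD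
  have hne : D.Nonempty := ⟨⊥, ⊥, wb_bot ⊥, wb_bot b⟩
  have hdir : DirectedOn (· ≤ ·) D := by
    rintro t₁ ⟨s₁, ht₁, hs₁⟩ t₂ ⟨s₂, ht₂, hs₂⟩
    refine ⟨t₁ ⊔ t₂, ⟨s₁ ⊔ s₂, ?_, wb_sup hs₁ hs₂⟩, le_sup_left, le_sup_right⟩
    exact wb_sup (wb_le_right ht₁ le_sup_left) (wb_le_right ht₂ le_sup_right)
  have hsup : b ≤ sSup D := by
    conv_lhs => rw [hcont b]
    refine sSup_le fun s hs => ?_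
    have : s = sSup {t | WayBelow t s} := hcont s
    rw [this]
    exact sSup_le fun t ht => le_sSup ⟨s, ht, hs⟩
  obtain ⟨t, ⟨s, hts, hsb⟩, hat⟩ := h D hne hdir hsup
  exact ⟨s, wb_le_left hat hts, hsb⟩

end Aux

section Quantale

variable {Q : Type*} [CompleteLattice Q] [Monoid Q] [IsQuantale Q]

/-- If `a ≪ b` then `a ≤ b * η` for some `η ≪ 1`. -/
lemma wb_approx (hcont : ContinuousLattice Q) {a b : Q} (h : WayBelow a b) :
    ∃ η : Q, WayBelow η 1 ∧ a ≤ b * η := by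
  set D : Set Q := (fun η => b * η) '' {η | WayBelow η 1} with hD
  have hne : D.Nonempty := ⟨b * ⊥, ⊥, wb_bot 1, rfl⟩
  have hdir : DirectedOn (· ≤ ·) D := by
    rintro _ ⟨η₁, hη₁, rfl⟩ _ ⟨η₂, hη₂, rfl⟩
    exact ⟨b * (η₁ ⊔ η₂), ⟨η₁ ⊔ η₂, wb_sup hη₁ hη₂, rfl⟩,
      mul_le_mul_right le_sup_left b, mul_le_mul_right le_sup_right b⟩
  have hsup : b ≤ sSup D := by
    have h1 : sSup D = b * sSup {η | WayBelow η 1} := by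
      rw [mul_sSup_distrib, hD, sSup_image]
    rw [h1, ← hcont 1, mul_one]
  obtain ⟨_, ⟨η, hη, rfl⟩, hle⟩ := h D hne hdir hsup
  exact ⟨η, hη, hle⟩

/-- Key lemma: around any point of the intersection of two balls there is a
small ball contained in both. -/
lemma ball_inter_key {X : Type*} (hcont : ContinuousLattice Q) (d : X → X → Q)
    (htri : ∀ x y z : X, d x y * d y z ≤ d x z)
    (x₁ x₂ y : X) (δ₁ δ₂ : Q)
    (hy : y ∈ ball d x₁ δ₁ ∩ ball d x₂ δ₂) :
    ∃ δ' : Q, WayBelow δ' 1 ∧ ball d y δ' ⊆ ball d x₁ δ₁ ∩ ball d x₂ δ₂ := by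
  obtain ⟨hy₁, hy₂⟩ := hy
  obtain ⟨ε₁, hδε₁, hε₁⟩ := wb_interpolate hcont hy₁
  obtain ⟨ε₂, hδε₂, hε₂⟩ := wb_interpolate hcont hy₂
  obtain ⟨η₁, hη₁, hle₁⟩ := wb_approx hcont hε₁
  obtain ⟨η₂, hη₂, hle₂⟩ := wb_approx hcont hε₂
  refine ⟨η₁ ⊔ η₂, wb_sup hη₁ hη₂, fun z hz => ?_⟩
  have hδ'z : η₁ ⊔ η₂ ≤ d y z := wb_le hz
  constructor
  · refine wb_le_right hδε₁ ?_
    calc ε₁ ≤ d x₁ y * η₁ := hle₁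
    _ ≤ d x₁ y * d y z := mul_le_mul_right (le_sup_left.trans hδ'z) _
    _ ≤ d x₁ z := htri x₁ y z
  · refine wb_le_right hδε₂ ?_
    calc ε₂ ≤ d x₂ y * η₂ := hle₂
    _ ≤ d x₂ y * d y z := mul_le_mul_right (le_sup_right.trans hδ'z) _
    _ ≤ d x₂ z := htri x₂ y z

end Quantale

theorem ball_inter_and_basis {Q X : Type*} [CompleteLattice Q] [Monoid Q] [IsQuantale Q]
    (hcont : ContinuousLattice Q) (d : X → X → Q)
    (hrefl : ∀ x : X, 1 ≤ d x x) (htri : ∀ x y z : X, d x y * d y z ≤ d x z)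
    (x₁ x₂ y : X) (δ₁ δ₂ : Q) (h₁ : WayBelow δ₁ 1) (h₂ : WayBelow δ₂ 1)
    (hy : y ∈ ball d x₁ δ₁ ∩ ball d x₂ δ₂) :
    (∃ δ' : Q, WayBelow δ' 1 ∧ ball d y δ' ⊆ ball d x₁ δ₁ ∩ ball d x₂ δ₂) ∧
    @TopologicalSpace.IsTopologicalBasis X
      (TopologicalSpace.generateFrom {s | ∃ (x : X) (δ : Q), WayBelow δ 1 ∧ s = ball d x δ})
      {s | ∃ (x : X) (δ : Q), WayBelow δ 1 ∧ s = ball d x δ} := by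
  refine ⟨ball_inter_key hcont d htri x₁ x₂ y δ₁ δ₂ hy, ?_⟩
  letI : TopologicalSpace X :=
    TopologicalSpace.generateFrom {s | ∃ (x : X) (δ : Q), WayBelow δ 1 ∧ s = ball d x δ}
  refine ⟨?_, ?_, rfl⟩
  · rintro t₁ ⟨a, δa, hδa, rfl⟩ t₂ ⟨b, δb, hδb, rfl⟩ x hx
    obtain ⟨δ', hδ', hsub⟩ := ball_inter_key hcont d htri a b x δa δb hx
    exact ⟨ball d x δ', ⟨x, δ', hδ', rfl⟩, wb_le_right hδ' (hrefl x), hsub⟩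
  · apply Set.eq_univ_of_forall
    intro x
    exact ⟨ball d x ⊥, ⟨x, ⊥, wb_bot 1, rfl⟩, wb_bot (d x x)⟩
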